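/- arXiv:2009.05382 — 2 statements merged into one kernel-verified Lean document; each statement's English description precedes it below -/
import Mathlib

section
/- Let D = (V,A) be a directed graph, s,t ∈ V, M ⊆ A, ℓ ≥ 1, let X₀ ⊆ A be the union of the arc sets of ℓ pairwise arc-disjoint directed s-t paths, and let Y ⊆ A∖X₀. Define the residual graph D_{X₀}(X₀ ∪ Y) on vertex set V whose arcs are the arcs of Y in their original direction together with the reversal of every arc of X₀. Then X₀ ∪ Y is a feasible FTF solution if and only if every vulnerable arc f ∈ M ∩ X₀ has both of its endpoints in the same strongly connected component of D_{X₀}(X₀ ∪ Y). -/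
/-- `P` is the arc set of a directed `s`-`t` path: there is a list of distinct vertices
starting at `s` and ending at `t` whose set of consecutive pairs is exactly `P`. -/
def IsPathArcs {V : Type*} [DecidableEq V] (s t : V) (P : Finset (V × V)) : Prop :=
  ∃ L : List V, L.head? = some s ∧ L.getLast? = some t ∧ L.Nodup ∧
    P = (L.zip L.tail).toFinset

/-- `S` contains `ℓ` pairwise arc-disjoint directed `s`-`t` paths. -/
def HasDisjointPaths {V : Type*} [DecidableEq V] (S : Finset (V × V)) (s t : V)
    (ℓ : ℕ) : Prop :=
  ∃ P : Fin ℓ → Finset (V × V), (∀ i, P i ⊆ S) ∧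
    (∀ i j, i ≠ j → Disjoint (P i) (P j)) ∧ ∀ i, IsPathArcs s t (P i)

/-- Feasibility for Fault-Tolerant Flow: for every vulnerable arc `f ∈ M`, the
digraph `(V, S \ {f})` contains `ℓ` pairwise arc-disjoint directed `s`-`t` paths. -/
def ftfFeasible {V : Type*} [DecidableEq V] (S M : Finset (V × V)) (s t : V)
    (ℓ : ℕ) : Prop :=
  ∀ f ∈ M, HasDisjointPaths (S.erase f) s t ℓ

section Aux
variable {V : Type*}

/-- pairs of a chain satisfy the relation -/
lemma chain'_pairs {r : V → V → Prop} :
    ∀ {L : List V}, L.Chain' r → ∀ p ∈ L.zip L.tail, r p.1 p.2 := by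
  intro L
  induction L with
  | nil => intro _ p hp; simp at hp
  | cons a L ih =>
    intro hc p hp
    cases L with
    | nil => simp at hp
    | cons b L' =>
      rw [List.Chain', List.isChain_cons_cons] at hc
      simp only [List.tail_cons, List.zip_cons_cons, List.mem_cons] at hp
      rcases hp with rfl | hp
      · exact hc.1
      · exact ih hc.2 p hp

/-- once outside R, stay outside (forward along the list) -/
lemma stay_out {R : V → Prop} :
    ∀ {L : List V}, (∀ p ∈ L.zip L.tail, ¬ R p.1 → ¬ R p.2) →
      ∀ h, L.head? = some h → ¬ R h → ∀ v ∈ L, ¬ R v := by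
  intro L
  induction L with
  | nil => intro _ h hh; simp at hh
  | cons a L ih =>
    intro hc h hh hR v hv
    simp only [List.head?_cons, Option.some.injEq] at hh
    subst hh
    rcases List.mem_cons.1 hv with rfl | hv
    · exact hR
    · cases L with
      | nil => simp at hv
      | cons b L' =>
        have hb : ¬ R b := hc (a, b) (by simp) hR
        have hc' : ∀ p ∈ (b :: L').zip (b :: L').tail, ¬ R p.1 → ¬ R p.2 := by
          intro p hp
          exact hc p (by simp only [List.tail_cons, List.zip_cons_cons, List.mem_cons]; right; exact hp)
        exact ih hc' b rfl hb v hv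

lemma last_out {R : V → Prop} :
    ∀ {L : List V}, (∀ p ∈ L.zip L.tail, ¬ R p.1 → ¬ R p.2) →
      ∀ v ∈ L, ¬ R v → ∀ w, L.getLast? = some w → ¬ R w := by
  intro L
  induction L with
  | nil => intro _ v hv; simp at hv
  | cons a L ih =>
    intro hc v hv hvR w hw
    cases L with
    | nil =>
      simp at hv hw
      subst hv; subst hw; exact hvR
    | cons b L' =>
      have hc' : ∀ p ∈ (b :: L').zip (b :: L').tail, ¬ R p.1 → ¬ R p.2 := by
        intro p hp
        exact hc p (by simp only [List.tail_cons, List.zip_cons_cons, List.mem_cons]; right; exact hp)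
      have hw' : (b :: L').getLast? = some w := by
        rw [List.getLast?_cons_cons] at hw
        exact hw
      rcases List.mem_cons.1 hv with rfl | hv
      · -- v = a : whole list outside
        have hb : ¬ R b := hc (v, b) (by simp) hvR
        have := stay_out hc' b rfl hb
        exact this w (List.mem_of_mem_getLast? hw')
      · exact ih hc' v hv hvR w hw'

lemma cross_exists {R : V → Prop} :
    ∀ {L : List V}, ∀ h w, L.head? = some h → L.getLast? = some w → R h → ¬ R w →
      ∃ p ∈ L.zip L.tail, R p.1 ∧ ¬ R p.2 := by
  intro L
  induction L with
  | nil => intro h w hh; simp at hh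
  | cons a L ih =>
    intro h w hh hw hRh hRw
    simp only [List.head?_cons, Option.some.injEq] at hh
    subst hh
    cases L with
    | nil =>
      simp at hw; subst hw; exact absurd hRh hRw
    | cons b L' =>
      rw [List.getLast?_cons_cons] at hw
      by_cases hb : R b
      · obtain ⟨p, hp, h1, h2⟩ := ih b w rfl hw hb hRw
        exact ⟨p, by simp only [List.tail_cons, List.zip_cons_cons, List.mem_cons]; right; exact hp, h1, h2⟩
      · exact ⟨(a, b), by simp, hRh, hb⟩

lemma cross_unique {R : V → Prop} :
    ∀ {L : List V}, (∀ p ∈ L.zip L.tail, ¬ R p.1 → ¬ R p.2) →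
      ∀ p ∈ L.zip L.tail, R p.1 → ¬ R p.2 →
      ∀ q ∈ L.zip L.tail, R q.1 → ¬ R q.2 → p = q := by
  intro L
  induction L with
  | nil => intro _ p hp; simp at hp
  | cons a L ih =>
    intro hc p hp hp1 hp2 q hq hq1 hq2
    cases L with
    | nil => simp at hp
    | cons b L' =>
      have hc' : ∀ r ∈ (b :: L').zip (b :: L').tail, ¬ R r.1 → ¬ R r.2 := by
        intro r hr
        exact hc r (by simp only [List.tail_cons, List.zip_cons_cons, List.mem_cons]; right; exact hr)
      simp only [List.tail_cons, List.zip_cons_cons, List.mem_cons] at hp hq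
      rcases hp with rfl | hp <;> rcases hq with rfl | hq
      · rfl
      · -- p = (a,b) so b ∉ R, but q.1 ∈ b::L' and R q.1
        exfalso
        have : ∀ v ∈ (b :: L'), ¬ R v := stay_out hc' b rfl hp2
        exact this q.1 (List.of_mem_zip hq).1 hq1
      · exfalso
        have : ∀ v ∈ (b :: L'), ¬ R v := stay_out hc' b rfl hq2
        exact this p.1 (List.of_mem_zip hp).1 hp1
      · exact ih hc' p hp hp1 hp2 q hq hq1 hq2

end Aux

section Aux2
variable {V : Type*} [DecidableEq V]

/-- signed degree (out minus in) of a vertex w.r.t. an arc set -/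
def netdeg (S : Finset (V × V)) (v : V) : ℤ :=
  ((S.filter (fun p => p.1 = v)).card : ℤ) - ((S.filter (fun p => p.2 = v)).card : ℤ)

lemma outcard (v : V) :
    ∀ {L : List V}, L.Nodup →
      (((L.zip L.tail).toFinset.filter (fun p => p.1 = v)).card : ℤ)
        = if v ∈ L.dropLast then 1 else 0 := by
  intro L
  induction L with
  | nil => intro _; simp
  | cons a L ih =>
    intro hnd
    cases L with
    | nil => simp
    | cons b L' =>
      have hnd' : (b :: L').Nodup := hnd.of_cons
      have ha : a ∉ b :: L' := (List.nodup_cons.1 hnd).1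
      simp only [List.tail_cons, List.zip_cons_cons, List.toFinset_cons]
      have ihx := ih hnd'
      simp only [List.tail_cons] at ihx
      by_cases hv : v = a
      · subst hv
        have h1 : Finset.filter (fun p : V × V => p.1 = v) ((b :: L').zip L').toFinset = ∅ := by
          apply Finset.filter_eq_empty_iff.2
          intro p hp h
          have : p.1 ∈ b :: L' := (List.of_mem_zip (List.mem_toFinset.1 hp)).1
          rw [h] at this
          exact ha this
        rw [Finset.filter_insert, if_pos rfl, h1]
        simp [List.dropLast_cons₂]
      · rw [Finset.filter_insert, if_neg (by simpa using Ne.symm hv), ihx]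
        simp [List.dropLast_cons₂, hv]

lemma incard (v : V) :
    ∀ {L : List V}, L.Nodup →
      (((L.zip L.tail).toFinset.filter (fun p => p.2 = v)).card : ℤ)
        = if v ∈ L.tail then 1 else 0 := by
  intro L
  induction L with
  | nil => intro _; simp
  | cons a L ih =>
    intro hnd
    cases L with
    | nil => simp
    | cons b L' =>
      have hnd' : (b :: L').Nodup := hnd.of_cons
      have hb : b ∉ L' := (List.nodup_cons.1 hnd').1
      simp only [List.tail_cons, List.zip_cons_cons, List.toFinset_cons]
      have ihx := ih hnd'
      simp only [List.tail_cons] at ihx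
      by_cases hv : v = b
      · subst hv
        have h1 : Finset.filter (fun p : V × V => p.2 = v) ((v :: L').zip L').toFinset = ∅ := by
          apply Finset.filter_eq_empty_iff.2
          intro p hp h
          have : p.2 ∈ L' := (List.of_mem_zip (List.mem_toFinset.1 hp)).2
          rw [h] at this
          exact hb this
        rw [Finset.filter_insert, if_pos rfl, h1]
        simp
      · rw [Finset.filter_insert, if_neg (by simpa using Ne.symm hv), ihx]
        simp [hv]; exact if_congr Iff.rfl rfl rfl

/-- net degree of the arc set of a simple path -/
lemma netdeg_path {s t : V} (hst : s ≠ t) {L : List V}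
    (hh : L.head? = some s) (hl : L.getLast? = some t) (hnd : L.Nodup) (v : V) :
    netdeg (L.zip L.tail).toFinset v
      = (if v = s then 1 else 0) - (if v = t then 1 else 0) := by
  obtain ⟨a, L', rfl⟩ : ∃ a L', L = a :: L' := by
    cases L with
    | nil => simp at hh
    | cons a L' => exact ⟨a, L', rfl⟩
  obtain rfl : s = a := by simpa using hh.symm
  have hne : (s :: L') ≠ [] := by simp
  have hlast : (s :: L').getLast hne = t := by
    rwa [List.getLast?_eq_getLast hne, Option.some.injEq] at hl
  have hsplit : (s :: L').dropLast ++ [t] = s :: L' := by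
    rw [← hlast]; exact List.dropLast_append_getLast hne
  have htmem : t ∈ s :: L' := List.mem_of_mem_getLast? hl
  have hsmem : s ∈ s :: L' := by simp
  have hstail : s ∉ L' := (List.nodup_cons.1 hnd).1
  have htdrop : t ∉ (s :: L').dropLast := by
    intro hmem
    have hn := hnd
    rw [← hsplit] at hn
    exact (List.disjoint_of_nodup_append hn) hmem (by simp)
  rw [netdeg, outcard v hnd, incard v hnd]
  have hmemdrop : v ∈ (s :: L').dropLast ↔ (v ∈ s :: L' ∧ v ≠ t) := by
    constructor
    · intro h
      refine ⟨List.dropLast_subset _ h, ?_⟩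
      rintro rfl; exact htdrop h
    · rintro ⟨h1, h2⟩
      rw [← hsplit, List.mem_append] at h1
      rcases h1 with h1 | h1
      · exact h1
      · simp at h1; exact absurd h1 h2
  have hmemtail : v ∈ (s :: L').tail ↔ (v ∈ s :: L' ∧ v ≠ s) := by
    simp only [List.tail_cons, List.mem_cons]
    constructor
    · intro h
      refine ⟨Or.inr h, ?_⟩
      rintro rfl; exact hstail h
    · rintro ⟨h1, h2⟩
      rcases h1 with rfl | h1
      · exact absurd rfl h2
      · exact h1
  by_cases hvL : v ∈ s :: L'
  · rw [if_congr hmemdrop (by rfl) (by rfl), if_congr hmemtail (by rfl) (by rfl)]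
    by_cases hvs : v = s <;> by_cases hvt : v = t <;>
      simp_all
  · have h1 : v ∉ (s :: L').dropLast := fun h => hvL (hmemdrop.1 h).1
    have h2 : v ∉ (s :: L').tail := fun h => hvL (hmemtail.1 h).1
    have hvs : v ≠ s := fun h => hvL (h ▸ hsmem)
    have hvt : v ≠ t := fun h => hvL (h ▸ htmem)
    have h2' : v ∉ L' := fun h => h2 (by simpa using h)
    simp [h1, h2', hvs, hvt]

lemma netdeg_union {S T : Finset (V × V)} (h : Disjoint S T) (v : V) :
    netdeg (S ∪ T) v = netdeg S v + netdeg T v := by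
  unfold netdeg
  rw [Finset.filter_union, Finset.filter_union,
    Finset.card_union_of_disjoint (Finset.disjoint_filter_filter h),
    Finset.card_union_of_disjoint (Finset.disjoint_filter_filter h)]
  push_cast; ring

lemma netdeg_sdiff {S T : Finset (V × V)} (h : T ⊆ S) (v : V) :
    netdeg (S \ T) v = netdeg S v - netdeg T v := by
  have hd : Disjoint (S \ T) T := Finset.sdiff_disjoint
  have h2 := netdeg_union hd v
  rw [Finset.sdiff_union_of_subset h] at h2
  linarith

lemma netdeg_singleton (p : V × V) (v : V) :
    netdeg {p} v = (if v = p.1 then 1 else 0) - (if v = p.2 then 1 else 0) := by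
  obtain ⟨x, y⟩ := p
  unfold netdeg
  simp only [Finset.filter_singleton]
  by_cases h1 : x = v <;> by_cases h2 : y = v
  · simp [h1, h2]
  · simp [h1, h2, Ne.symm h2]
  · simp [h1, h2, Ne.symm h1]
  · simp [h1, h2, Ne.symm h1, Ne.symm h2]

lemma netdeg_insert {S : Finset (V × V)} {p : V × V} (h : p ∉ S) (v : V) :
    netdeg (insert p S) v = netdeg {p} v + netdeg S v := by
  rw [Finset.insert_eq, netdeg_union (by simp [h])]

lemma netdeg_swap (S : Finset (V × V)) (v : V) :
    netdeg (S.image Prod.swap) v = - netdeg S v := by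
  unfold netdeg
  have h1 : (S.image Prod.swap).filter (fun p => p.1 = v)
      = (S.filter (fun p => p.2 = v)).image Prod.swap := by
    rw [Finset.filter_image]; rfl
  have h2 : (S.image Prod.swap).filter (fun p => p.2 = v)
      = (S.filter (fun p => p.1 = v)).image Prod.swap := by
    rw [Finset.filter_image]; rfl
  rw [h1, h2, Finset.card_image_of_injective _ Prod.swap_injective,
    Finset.card_image_of_injective _ Prod.swap_injective]
  ring

lemma netdeg_biUnion {ι : Type*} [DecidableEq ι] (I : Finset ι) (f : ι → Finset (V × V))
    (hdisj : ∀ i ∈ I, ∀ j ∈ I, i ≠ j → Disjoint (f i) (f j)) (v : V) :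
    netdeg (I.biUnion f) v = ∑ i ∈ I, netdeg (f i) v := by
  unfold netdeg
  rw [Finset.filter_biUnion, Finset.filter_biUnion,
    Finset.card_biUnion (fun i hi j hj hij => Finset.disjoint_filter_filter (hdisj i hi j hj hij)),
    Finset.card_biUnion (fun i hi j hj hij => Finset.disjoint_filter_filter (hdisj i hi j hj hij))]
  push_cast
  rw [Finset.sum_sub_distrib]


lemma netdeg_cut (S : Finset (V × V)) (Rf : Finset V) :
    ∑ v ∈ Rf, netdeg S v
      = ((S.filter (fun p => p.1 ∈ Rf ∧ p.2 ∉ Rf)).card : ℤ)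
        - ((S.filter (fun p => p.1 ∉ Rf ∧ p.2 ∈ Rf)).card : ℤ) := by
  have e1 : S.filter (fun p => p.1 ∈ Rf) = Rf.biUnion (fun v => S.filter (fun p => p.1 = v)) := by
    ext p
    simp only [Finset.mem_filter, Finset.mem_biUnion]
    constructor
    · rintro ⟨hp, hm⟩; exact ⟨p.1, hm, hp, rfl⟩
    · rintro ⟨v, hv, hp, rfl⟩; exact ⟨hp, hv⟩
  have e2 : S.filter (fun p => p.2 ∈ Rf) = Rf.biUnion (fun v => S.filter (fun p => p.2 = v)) := by
    ext p
    simp only [Finset.mem_filter, Finset.mem_biUnion]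
    constructor
    · rintro ⟨hp, hm⟩; exact ⟨p.2, hm, hp, rfl⟩
    · rintro ⟨v, hv, hp, rfl⟩; exact ⟨hp, hv⟩
  have d1 : ∀ v ∈ Rf, ∀ w ∈ Rf, v ≠ w →
      Disjoint (S.filter (fun p => p.1 = v)) (S.filter (fun p => p.1 = w)) := by
    intro v _ w _ hvw
    rw [Finset.disjoint_left]
    intro p hp hq
    exact hvw ((Finset.mem_filter.1 hp).2 ▸ (Finset.mem_filter.1 hq).2 ▸ rfl)
  have d2 : ∀ v ∈ Rf, ∀ w ∈ Rf, v ≠ w →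
      Disjoint (S.filter (fun p => p.2 = v)) (S.filter (fun p => p.2 = w)) := by
    intro v _ w _ hvw
    rw [Finset.disjoint_left]
    intro p hp hq
    exact hvw ((Finset.mem_filter.1 hp).2 ▸ (Finset.mem_filter.1 hq).2 ▸ rfl)
  have c1 : ((S.filter (fun p => p.1 ∈ Rf)).card : ℤ)
      = ∑ v ∈ Rf, ((S.filter (fun p => p.1 = v)).card : ℤ) := by
    rw [e1, Finset.card_biUnion d1]; push_cast; rfl
  have c2 : ((S.filter (fun p => p.2 ∈ Rf)).card : ℤ)
      = ∑ v ∈ Rf, ((S.filter (fun p => p.2 = v)).card : ℤ) := by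
    rw [e2, Finset.card_biUnion d2]; push_cast; rfl
  have s1 : (S.filter (fun p => p.1 ∈ Rf)).card
      = (S.filter (fun p => p.1 ∈ Rf ∧ p.2 ∈ Rf)).card
        + (S.filter (fun p => p.1 ∈ Rf ∧ p.2 ∉ Rf)).card := by
    rw [← Finset.filter_filter, ← Finset.filter_filter]
    exact (Finset.card_filter_add_card_filter_not (fun p : V × V => p.2 ∈ Rf)).symm
  have s2 : (S.filter (fun p => p.2 ∈ Rf)).card
      = (S.filter (fun p => p.2 ∈ Rf ∧ p.1 ∈ Rf)).card
        + (S.filter (fun p => p.2 ∈ Rf ∧ p.1 ∉ Rf)).card := by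
    rw [← Finset.filter_filter, ← Finset.filter_filter]
    exact (Finset.card_filter_add_card_filter_not (fun p : V × V => p.1 ∈ Rf)).symm
  have e3 : S.filter (fun p => p.2 ∈ Rf ∧ p.1 ∈ Rf) = S.filter (fun p => p.1 ∈ Rf ∧ p.2 ∈ Rf) := by
    apply Finset.filter_congr; intro p _; exact and_comm
  have e4 : S.filter (fun p => p.2 ∈ Rf ∧ p.1 ∉ Rf) = S.filter (fun p => p.1 ∉ Rf ∧ p.2 ∈ Rf) := by
    apply Finset.filter_congr; intro p _; exact and_comm
  unfold netdeg
  rw [Finset.sum_sub_distrib, ← c1, ← c2, s1, s2, e3, e4]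
  push_cast
  ring

lemma flow_reach [Fintype V] (S : Finset (V × V)) (s t : V) (k : ℕ) (hk : 1 ≤ k)
    (hcons : ∀ v, v ≠ s → v ≠ t → netdeg S v = 0) (hs : netdeg S s = (k : ℤ)) :
    Relation.ReflTransGen (fun x y => (x, y) ∈ S) s t := by
  classical
  by_contra ht
  set R : Finset V := Finset.univ.filter (fun v => Relation.ReflTransGen (fun x y => (x, y) ∈ S) s v) with hR
  have hsR : s ∈ R := by simp only [hR, Finset.mem_filter, Finset.mem_univ, true_and]; exact Relation.ReflTransGen.refl
  have htR : t ∉ R := by simp [hR]; exact ht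
  have hclosed : ∀ p ∈ S, p.1 ∈ R → p.2 ∈ R := by
    intro p hp h1
    simp only [hR, Finset.mem_filter, Finset.mem_univ, true_and] at h1 ⊢
    exact h1.tail (show (p.1, p.2) ∈ S from by rwa [Prod.mk.eta])
  have hsum : ∑ v ∈ R, netdeg S v = (k : ℤ) := by
    rw [Finset.sum_eq_single s]
    · exact hs
    · intro v hv hvs
      exact hcons v hvs (fun h => htR (h ▸ hv))
    · intro h; exact absurd hsR h
  have hempty : S.filter (fun p => p.1 ∈ R ∧ p.2 ∉ R) = ∅ := by
    apply Finset.filter_eq_empty_iff.2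
    intro p hp ⟨h1, h2⟩
    exact h2 (hclosed p hp h1)
  have := netdeg_cut S R
  rw [hsum, hempty] at this
  simp at this
  omega

lemma rtg_nodup_chain {r : V → V → Prop} {s t : V} (h : Relation.ReflTransGen r s t) :
    ∃ L : List V, L.head? = some s ∧ L.getLast? = some t ∧ L.Nodup ∧ L.Chain' r := by
  induction h using Relation.ReflTransGen.head_induction_on with
  | refl => exact ⟨[t], by simp, by simp, by simp, List.isChain_singleton _⟩
  | head h' _ ih =>
    rename_i a c _
    obtain ⟨L, hh, hl, hnd, hch⟩ := ih
    by_cases haL : a ∈ L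
    · obtain ⟨l1, l2, rfl⟩ := List.append_of_mem haL
      refine ⟨a :: l2, by simp, ?_, ?_, ?_⟩
      · rw [List.getLast?_append] at hl
        have hsom : (a :: l2).getLast? = some ((a :: l2).getLast (by simp)) :=
          List.getLast?_eq_getLast _
        rw [hsom]
        exact hl
      · exact hnd.sublist (List.sublist_append_right l1 (a :: l2))
      · exact hch.right_of_append
    · cases L with
      | nil => simp at hh
      | cons b L' =>
        obtain rfl : b = c := by simpa using hh
        refine ⟨a :: b :: L', by simp, ?_, ?_, ?_⟩
        · rw [List.getLast?_cons_cons]; exact hl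
        · exact List.nodup_cons.2 ⟨haL, hnd⟩
        · exact List.isChain_cons_cons.2 ⟨h', hch⟩

end Aux2

section Aux3
variable {V : Type*} [DecidableEq V]

lemma zip_nodup_ne : ∀ {L : List V}, L.Nodup → ∀ p ∈ L.zip L.tail, p.1 ≠ p.2 := by
  intro L
  induction L with
  | nil => intro _ p hp; simp at hp
  | cons a L ih =>
    intro hnd p hp
    cases L with
    | nil => simp at hp
    | cons b L' =>
      simp only [List.tail_cons, List.zip_cons_cons, List.mem_cons] at hp
      rcases hp with rfl | hp
      · intro h
        have hmem : a ∈ b :: L' := by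
          rw [show a = b from h]; exact List.mem_cons_self
        exact (List.nodup_cons.1 hnd).1 hmem
      · exact ih hnd.of_cons p hp

lemma hdp_mono {S T : Finset (V × V)} {s t : V} {k : ℕ} (hST : S ⊆ T)
    (h : HasDisjointPaths S s t k) : HasDisjointPaths T s t k := by
  obtain ⟨P, h1, h2, h3⟩ := h
  exact ⟨P, fun i => (h1 i).trans hST, h2, h3⟩

lemma flow_decomp [Fintype V] (s t : V) (hst : s ≠ t) :
    ∀ (k : ℕ) (S : Finset (V × V)), (∀ v, v ≠ s → v ≠ t → netdeg S v = 0) →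
      netdeg S s = (k : ℤ) → HasDisjointPaths S s t k := by
  intro k
  induction k with
  | zero =>
    intro S _ _
    exact ⟨fun i => i.elim0, fun i => i.elim0, fun i => i.elim0, fun i => i.elim0⟩
  | succ k ih =>
    intro S hcons hs
    have hreach := flow_reach S s t (k + 1) (by omega) hcons (by exact_mod_cast hs)
    obtain ⟨L, hh, hl, hnd, hch⟩ := rtg_nodup_chain hreach
    set Q := (L.zip L.tail).toFinset with hQ
    have hQS : Q ⊆ S := by
      intro p hp
      have h := chain'_pairs hch p (List.mem_toFinset.1 hp)
      rwa [Prod.mk.eta] at h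
    have hQnet : ∀ v, netdeg Q v = (if v = s then 1 else 0) - (if v = t then 1 else 0) :=
      netdeg_path hst hh hl hnd
    have hcons' : ∀ v, v ≠ s → v ≠ t → netdeg (S \ Q) v = 0 := by
      intro v h1 h2
      rw [netdeg_sdiff hQS, hQnet, hcons v h1 h2]
      simp [h1, h2]
    have hs' : netdeg (S \ Q) s = (k : ℤ) := by
      rw [netdeg_sdiff hQS, hQnet, hs]
      simp only [if_pos rfl, if_neg hst]
      push_cast; ring
    obtain ⟨P', hP'sub, hP'disj, hP'path⟩ := ih (S \ Q) hcons' hs'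
    refine ⟨Fin.cons Q P', ?_, ?_, ?_⟩
    · intro i
      refine Fin.cases ?_ ?_ i
      · simpa only [Fin.cons_zero] using hQS
      · intro j
        simpa only [Fin.cons_succ] using (hP'sub j).trans Finset.sdiff_subset
    · have key : ∀ j : Fin k, Disjoint Q (P' j) := by
        intro j
        rw [Finset.disjoint_left]
        intro a haQ haP
        exact (Finset.mem_sdiff.1 (hP'sub j haP)).2 haQ
      intro i j hij
      rcases Fin.eq_zero_or_eq_succ i with rfl | ⟨i', rfl⟩ <;>
        rcases Fin.eq_zero_or_eq_succ j with rfl | ⟨j', rfl⟩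
      · exact absurd rfl hij
      · simpa only [Fin.cons_zero, Fin.cons_succ] using key j'
      · simpa only [Fin.cons_zero, Fin.cons_succ] using (key i').symm
      · simp only [Fin.cons_succ]
        exact hP'disj i' j' (fun h => hij (by rw [h]))
    · intro i
      refine Fin.cases ?_ ?_ i
      · simp only [Fin.cons_zero]
        exact ⟨L, hh, hl, hnd, rfl⟩
      · intro j
        simpa only [Fin.cons_succ] using hP'path j

end Aux3

/-- Characterization of feasible augmentations via the residual graph: let `X₀` be the
union of `ℓ` pairwise arc-disjoint directed `s`-`t` paths and `Y ⊆ A \ X₀`. In the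
residual graph `D_{X₀}(X₀ ∪ Y)` (arcs of `Y` forward, arcs of `X₀` reversed), the set
`X₀ ∪ Y` is a feasible FTF solution iff every vulnerable arc `f ∈ M ∩ X₀` has both of
its endpoints in the same strongly connected component, i.e. its endpoints are
mutually reachable in the residual graph. -/
theorem stmt15 {V : Type*} [Fintype V] [DecidableEq V] (A X₀ Y M : Finset (V × V))
    (s t : V) (ℓ : ℕ) (hℓ : 1 ≤ ℓ)
    (P : Fin ℓ → Finset (V × V))
    (hPdisj : ∀ i j, i ≠ j → Disjoint (P i) (P j))
    (hPpath : ∀ i, IsPathArcs s t (P i))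
    (hX₀ : X₀ = Finset.univ.biUnion P)
    (hX₀A : X₀ ⊆ A) (hYA : Y ⊆ A \ X₀) (hMA : M ⊆ A) :
    ftfFeasible (X₀ ∪ Y) M s t ℓ ↔
      ∀ f ∈ M ∩ X₀,
        Relation.ReflTransGen (fun x y => (x, y) ∈ Y ∨ (y, x) ∈ X₀) f.1 f.2 ∧
        Relation.ReflTransGen (fun x y => (x, y) ∈ Y ∨ (y, x) ∈ X₀) f.2 f.1 := by
  classical
  have harcne : ∀ p ∈ X₀, p.1 ≠ p.2 := by
    intro p hp
    rw [hX₀] at hp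
    obtain ⟨i, _, hpi⟩ := Finset.mem_biUnion.1 hp
    obtain ⟨L, hh, hl, hnd, hPe⟩ := hPpath i
    rw [hPe, List.mem_toFinset] at hpi
    exact zip_nodup_ne hnd p hpi
  have hPsubX : ∀ i, P i ⊆ X₀ := by
    intro i p hp
    rw [hX₀]
    exact Finset.mem_biUnion.2 ⟨i, Finset.mem_univ i, hp⟩
  have hYX : ∀ p ∈ Y, p ∉ X₀ := fun p hp => (Finset.mem_sdiff.1 (hYA hp)).2
  constructor
  · -- feasibility ⟹ residual reachability
    intro hfeas f hf
    obtain ⟨hfM, hfX⟩ := Finset.mem_inter.1 hf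
    have hback : Relation.ReflTransGen (fun x y => (x, y) ∈ Y ∨ (y, x) ∈ X₀) f.2 f.1 :=
      Relation.ReflTransGen.single (Or.inr (by rwa [Prod.mk.eta]))
    refine ⟨?_, hback⟩
    by_contra hreach
    set R : V → Prop := fun v =>
      Relation.ReflTransGen (fun x y => (x, y) ∈ Y ∨ (y, x) ∈ X₀) f.1 v with hRdef
    have hRf1 : R f.1 := Relation.ReflTransGen.refl
    have hRf2 : ¬ R f.2 := hreach
    have hX₀rule : ∀ p : V × V, p ∈ X₀ → R p.2 → R p.1 := by
      intro p hp h2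
      exact h2.tail (Or.inr (by rwa [Prod.mk.eta]))
    have hYrule : ∀ p : V × V, p ∈ Y → R p.1 → R p.2 := by
      intro p hp h1
      exact h1.tail (Or.inl (by rwa [Prod.mk.eta]))
    set C : Finset (V × V) := X₀.filter (fun p => R p.1 ∧ ¬ R p.2) with hC
    have hfC : f ∈ C := Finset.mem_filter.2 ⟨hfX, hRf1, hRf2⟩
    have hchain : ∀ (i : Fin ℓ) (p : V × V), p ∈ P i → ¬ R p.1 → ¬ R p.2 := by
      intro i p hp h1 h2
      exact h1 (hX₀rule p (hPsubX i hp) h2)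
    -- the path through f shows s ∈ R and t ∉ R
    have hfX' := hfX
    rw [hX₀] at hfX'
    obtain ⟨i₀, -, hfi₀⟩ := Finset.mem_biUnion.1 hfX'
    obtain ⟨L₀, hh₀, hl₀, hnd₀, hPe₀⟩ := hPpath i₀
    have hfL₀ : f ∈ L₀.zip L₀.tail := by
      rw [hPe₀] at hfi₀; exact List.mem_toFinset.1 hfi₀
    have hcond₀ : ∀ p ∈ L₀.zip L₀.tail, ¬ R p.1 → ¬ R p.2 := by
      intro p hp
      exact hchain i₀ p (by rw [hPe₀]; exact List.mem_toFinset.2 hp)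
    have hsR : R s := by
      by_contra hsR
      exact (stay_out hcond₀ s hh₀ hsR f.1 (List.of_mem_zip hfL₀).1) hRf1
    have htR : ¬ R t :=
      last_out hcond₀ f.2 (List.tail_subset L₀ (List.of_mem_zip hfL₀).2) hRf2 t hl₀
    -- |C| ≤ ℓ
    have hCle : C.card ≤ ℓ := by
      set g : V × V → Fin ℓ := fun c => if h : ∃ i : Fin ℓ, c ∈ P i then h.choose else ⟨0, hℓ⟩
        with hg
      have hmemP : ∀ c ∈ C, ∃ i : Fin ℓ, c ∈ P i := by
        intro c hc
        have hcX := (Finset.mem_filter.1 hc).1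
        rw [hX₀] at hcX
        obtain ⟨i, -, hi⟩ := Finset.mem_biUnion.1 hcX
        exact ⟨i, hi⟩
      have hinj : Set.InjOn g (C : Set (V × V)) := by
        intro c hc c' hc' hgc
        have hcex := hmemP c hc
        have hc'ex := hmemP c' hc'
        rw [hg] at hgc
        simp only [dif_pos hcex, dif_pos hc'ex] at hgc
        have hci : c ∈ P hcex.choose := hcex.choose_spec
        have hc'i : c' ∈ P hcex.choose := by rw [hgc]; exact hc'ex.choose_spec
        obtain ⟨L, hh, hl, hnd, hPe⟩ := hPpath hcex.choose
        have hcond : ∀ p ∈ L.zip L.tail, ¬ R p.1 → ¬ R p.2 := by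
          intro p hp
          exact hchain hcex.choose p (by rw [hPe]; exact List.mem_toFinset.2 hp)
        have hcL : c ∈ L.zip L.tail := by
          rw [hPe] at hci; exact List.mem_toFinset.1 hci
        have hc'L : c' ∈ L.zip L.tail := by
          rw [hPe] at hc'i; exact List.mem_toFinset.1 hc'i
        have hcmem := Finset.mem_filter.1 hc
        have hc'mem := Finset.mem_filter.1 hc'
        exact cross_unique hcond c hcL hcmem.2.1 hcmem.2.2 c' hc'L hc'mem.2.1 hc'mem.2.2
      have := Finset.card_le_card_of_injOn g (fun c _ => Finset.mem_univ (g c)) hinj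
      simpa using this
    -- ℓ ≤ |C \ {f}|
    obtain ⟨Q, hQsub, hQdisj, hQpath⟩ := hfeas f hfM
    have hex : ∀ i : Fin ℓ, ∃ p, p ∈ Q i ∧ p ∈ C.erase f := by
      intro i
      obtain ⟨L, hh, hl, hnd, hPe⟩ := hQpath i
      obtain ⟨p, hp, h1, h2⟩ := cross_exists (R := R) s t hh hl hsR htR
      have hpQ : p ∈ Q i := by rw [hPe]; exact List.mem_toFinset.2 hp
      have hpXY := hQsub i hpQ
      have hpf : p ≠ f := (Finset.mem_erase.1 hpXY).1
      have hpX : p ∈ X₀ := by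
        rcases Finset.mem_union.1 (Finset.mem_of_mem_erase hpXY) with h | h
        · exact h
        · exact absurd (hYrule p h h1) h2
      exact ⟨p, hpQ, Finset.mem_erase.2 ⟨hpf, Finset.mem_filter.2 ⟨hpX, h1, h2⟩⟩⟩
    choose c hc1 hc2 using hex
    have hinj : Set.InjOn c (Finset.univ : Finset (Fin ℓ)) := by
      intro i _ j _ hij
      by_contra hne
      have := hQdisj i j hne
      rw [Finset.disjoint_left] at this
      exact this (hc1 i) (hij ▸ hc1 j)
    have hcard := Finset.card_le_card_of_injOn c (fun i _ => hc2 i) hinj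
    rw [Finset.card_univ, Fintype.card_fin, Finset.card_erase_of_mem hfC] at hcard
    have hCpos : 0 < C.card := Finset.card_pos.2 ⟨f, hfC⟩
    omega
  · -- residual reachability ⟹ feasibility
    intro hres f hfM
    by_cases hst : s = t
    · exact ⟨fun _ => ∅, fun i => Finset.empty_subset _,
        fun i j _ => Finset.disjoint_left.2 (fun a ha => absurd ha (Finset.notMem_empty a)),
        fun i => ⟨[s], by simp, by simp [hst], by simp, by simp⟩⟩
    by_cases hfX : f ∈ X₀
    · -- the interesting case: augment along a residual cycle through f
      have hr := (hres f (Finset.mem_inter.2 ⟨hfM, hfX⟩)).1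
      have hf12 : f.1 ≠ f.2 := harcne f hfX
      obtain ⟨L, hh, hl, hnd, hch⟩ := rtg_nodup_chain hr
      set pairs := (L.zip L.tail).toFinset with hpairs
      set addA := pairs.filter (fun p => p ∈ Y) with haddA
      set delS := (pairs.filter (fun p => p ∉ Y)).image Prod.swap with hdelS
      have hfdelS : f ∉ delS := by
        intro hmem
        obtain ⟨p, hp, hpf⟩ := Finset.mem_image.1 hmem
        have hp2 : p.2 = f.1 := by
          have := congrArg Prod.fst hpf
          simpa using this
        have hptail : p.2 ∈ L.tail :=
          (List.of_mem_zip (List.mem_toFinset.1 (Finset.mem_filter.1 hp).1)).2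
        obtain ⟨a, L', rfl⟩ : ∃ a L', L = a :: L' := by
          cases L with
          | nil => simp at hh
          | cons a L' => exact ⟨a, L', rfl⟩
        obtain rfl : f.1 = a := by
          have := hh; simp only [List.head?_cons, Option.some.injEq] at this
          exact this.symm
        rw [hp2] at hptail
        exact (List.nodup_cons.1 hnd).1 hptail
      set delA := insert f delS with hdelA
      have hpairs_rel : ∀ p ∈ pairs, p ∈ Y ∨ (p.2, p.1) ∈ X₀ := by
        intro p hp
        have h := chain'_pairs hch p (List.mem_toFinset.1 hp)
        rcases h with h | h
        · left; rwa [Prod.mk.eta] at h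
        · right; exact h
      have hdelsub : delA ⊆ X₀ := by
        intro p hp
        rcases Finset.mem_insert.1 hp with rfl | hp
        · exact hfX
        · obtain ⟨q, hq, rfl⟩ := Finset.mem_image.1 hp
          have hqp := Finset.mem_filter.1 hq
          rcases hpairs_rel q hqp.1 with h | h
          · exact absurd h hqp.2
          · exact h
      have hnetpairs : ∀ v, netdeg pairs v
          = (if v = f.1 then 1 else 0) - (if v = f.2 then 1 else 0) :=
        netdeg_path hf12 hh hl hnd
      have hdisjYn : Disjoint (pairs.filter (fun p => p ∈ Y))
          (pairs.filter (fun p => p ∉ Y)) :=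
        Finset.disjoint_filter_filter_not pairs pairs (fun p => p ∈ Y)
      have hsplitp : pairs.filter (fun p => p ∈ Y) ∪ pairs.filter (fun p => p ∉ Y) = pairs :=
        Finset.filter_union_filter_not_eq _ pairs
      have hnetadd_plus : ∀ v,
          netdeg addA v + netdeg (pairs.filter (fun p => p ∉ Y)) v = netdeg pairs v := by
        intro v
        have h := netdeg_union hdisjYn v
        rw [hsplitp] at h
        rw [haddA]
        linarith
      have hnetdelA : ∀ v, netdeg delA v
          = netdeg ({f} : Finset (V × V)) v - netdeg (pairs.filter (fun p => p ∉ Y)) v := by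
        intro v
        rw [hdelA, netdeg_insert hfdelS, hdelS, netdeg_swap]
        ring
      set S' := (X₀ \ delA) ∪ addA with hS'
      have haddY : addA ⊆ Y := fun p hp => (Finset.mem_filter.1 hp).2
      have hdisjS' : Disjoint (X₀ \ delA) addA := by
        rw [Finset.disjoint_right]
        intro p hp hmem
        exact hYX p (haddY hp) (Finset.mem_sdiff.1 hmem).1
      have hnetS' : ∀ v, netdeg S' v = netdeg X₀ v := by
        intro v
        rw [hS', netdeg_union hdisjS', netdeg_sdiff hdelsub]
        have h1 := hnetadd_plus v
        have h2 := hnetdelA v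
        have h3 := hnetpairs v
        have h4 := netdeg_singleton f v
        linarith
      have hnetX₀ : ∀ v, netdeg X₀ v
          = (ℓ : ℤ) * ((if v = s then 1 else 0) - (if v = t then 1 else 0)) := by
        intro v
        rw [hX₀, netdeg_biUnion _ _ (fun i _ j _ hij => hPdisj i j hij) v]
        have hconst : ∀ i ∈ (Finset.univ : Finset (Fin ℓ)), netdeg (P i) v
            = ((if v = s then 1 else 0) - (if v = t then 1 else 0)) := by
          intro i _
          obtain ⟨L', hh', hl', hnd', hPe'⟩ := hPpath i
          rw [hPe']
          exact netdeg_path hst hh' hl' hnd' v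
        rw [Finset.sum_congr rfl hconst, Finset.sum_const, Finset.card_univ, Fintype.card_fin,
          nsmul_eq_mul]
      have hdp := flow_decomp s t hst ℓ S'
        (fun v h1 h2 => by rw [hnetS', hnetX₀]; simp [h1, h2])
        (by rw [hnetS' s, hnetX₀ s]; simp [hst])
      apply hdp_mono ?_ hdp
      intro p hp
      rcases Finset.mem_union.1 hp with hp | hp
      · obtain ⟨h1, h2⟩ := Finset.mem_sdiff.1 hp
        exact Finset.mem_erase.2
          ⟨fun h => h2 (h ▸ Finset.mem_insert_self f delS), Finset.mem_union_left _ h1⟩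
      · exact Finset.mem_erase.2
          ⟨fun h => hYX p (haddY hp) (h ▸ hfX), Finset.mem_union_right _ (haddY hp)⟩
    · refine ⟨P, fun i p hp => ?_, hPdisj, hPpath⟩
      exact Finset.mem_erase.2
        ⟨fun h => hfX (h ▸ hPsubX i hp), Finset.mem_union_left _ (hPsubX i hp)⟩
end

section
/- Let G = (U,W,E) be a bipartite graph with |U| = |W| = n. Construct a directed graph D' on vertex set U ∪ W ∪ {s,t} with arc set A_s = {(s,u) : u ∈ U}, A_t = {(w,t) : w ∈ W}, and all arcs (u,w) for u ∈ U, w ∈ W; let the vulnerable arcs be M = {(u,w) : uw ∈ E}. Then for every set X of edges of the bipartite complement of G (pairs uw with u ∈ U, w ∈ W, uw ∉ E), the arc set A_s ∪ A_t ∪ {(u,w) : uw ∈ E ∪ X} is a feasible FTF solution with ℓ = n on (D', s, t, M) if and only if for every edge e ∈ E the bipartite graph (U, W, (E ∪ X)∖{e}) contains a perfect matching. -/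
/-- The vertex set of the constructed digraph: `Sum.inl (Sum.inl u)` are the vertices
of `U`, `Sum.inl (Sum.inr w)` those of `W`, `Sum.inr false` is `s`, `Sum.inr true` is `t`. -/
abbrev BipVert (n : ℕ) : Type := (Fin n ⊕ Fin n) ⊕ Bool

/-- The arcs of the constructed digraph corresponding to a set `B` of bipartite pairs. -/
def midArcs (n : ℕ) (B : Finset (Fin n × Fin n)) : Finset (BipVert n × BipVert n) :=
  B.image (fun p => ((Sum.inl (Sum.inl p.1) : BipVert n), (Sum.inl (Sum.inr p.2) : BipVert n)))

def fullArcs (n : ℕ) (B : Finset (Fin n × Fin n)) : Finset (BipVert n × BipVert n) :=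
  (Finset.univ.image
      (fun u : Fin n => ((Sum.inr false : BipVert n), (Sum.inl (Sum.inl u) : BipVert n)))) ∪
  (Finset.univ.image
      (fun w : Fin n => ((Sum.inl (Sum.inr w) : BipVert n), (Sum.inr true : BipVert n)))) ∪
  midArcs n B

lemma mem_fullArcs {n : ℕ} {B : Finset (Fin n × Fin n)} {a : BipVert n × BipVert n} :
    a ∈ fullArcs n B ↔
      (∃ u : Fin n, a = (Sum.inr false, Sum.inl (Sum.inl u))) ∨
      (∃ w : Fin n, a = (Sum.inl (Sum.inr w), Sum.inr true)) ∨
      (∃ p ∈ B, a = (Sum.inl (Sum.inl p.1), Sum.inl (Sum.inr p.2))) := by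
  simp [fullArcs, midArcs, eq_comm]

lemma path_struct {n : ℕ} {B : Finset (Fin n × Fin n)} {P : Finset (BipVert n × BipVert n)}
    (hP : P ⊆ fullArcs n B)
    (hpath : IsPathArcs (Sum.inr false : BipVert n) (Sum.inr true) P) :
    ∃ u w : Fin n, (u, w) ∈ B ∧
      P = {((Sum.inr false : BipVert n), Sum.inl (Sum.inl u)),
           (Sum.inl (Sum.inl u), Sum.inl (Sum.inr w)),
           (Sum.inl (Sum.inr w), Sum.inr true)} := by
  obtain ⟨L, hh, hl, _, hPe⟩ := hpath
  cases L with
  | nil => simp at hh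
  | cons a l =>
    simp only [List.head?_cons, Option.some.injEq] at hh
    subst hh
    cases l with
    | nil => simp at hl
    | cons b l2 =>
      have hab : ((Sum.inr false : BipVert n), b) ∈ P := by
        subst hPe; simp
      obtain ⟨u, hu⟩ : ∃ u : Fin n, b = Sum.inl (Sum.inl u) := by
        rcases mem_fullArcs.mp (hP hab) with ⟨u, h⟩ | ⟨w, h⟩ | ⟨p, _, h⟩ <;>
          simp_all
      subst hu
      cases l2 with
      | nil => simp at hl
      | cons c l3 =>
        have hbc : ((Sum.inl (Sum.inl u) : BipVert n), c) ∈ P := by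
          subst hPe; simp
        obtain ⟨w, hw, hwB⟩ : ∃ w : Fin n, c = Sum.inl (Sum.inr w) ∧ (u, w) ∈ B := by
          rcases mem_fullArcs.mp (hP hbc) with ⟨u', h⟩ | ⟨w', h⟩ | ⟨p, hp, h⟩
          · simp_all
          · simp_all
          · obtain ⟨h1, h2⟩ := Prod.mk.injEq .. ▸ h
            refine ⟨p.2, by simp_all, ?_⟩
            have : u = p.1 := by simp_all
            subst this; simpa using hp
        subst hw
        cases l3 with
        | nil => simp at hl
        | cons d l4 =>
          have hcd : ((Sum.inl (Sum.inr w) : BipVert n), d) ∈ P := by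
            subst hPe; simp
          have hd : d = Sum.inr true := by
            rcases mem_fullArcs.mp (hP hcd) with ⟨u', h⟩ | ⟨w', h⟩ | ⟨p, _, h⟩ <;>
              simp_all
          subst hd
          cases l4 with
          | nil =>
            refine ⟨u, w, hwB, ?_⟩
            subst hPe
            simp [Finset.ext_iff]
          | cons e l5 =>
            exfalso
            have hde : ((Sum.inr true : BipVert n), e) ∈ P := by
              subst hPe; simp
            rcases mem_fullArcs.mp (hP hde) with ⟨u', h⟩ | ⟨w', h⟩ | ⟨p, _, h⟩ <;>
              simp_all

/-- Correctness of the reduction from Weighted Robust Matching Augmentation to FTF: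
given a balanced bipartite graph `(U, W, E)` with `|U| = |W| = n`, add vertices `s, t`,
arcs `A_s` from `s` to all of `U`, arcs `A_t` from all of `W` to `t`, and all arcs from
`U` to `W`, the vulnerable ones being `M = {(u, w) : uw ∈ E}`. Then for every set `X`
of non-edges of `E`, the arc set `A_s ∪ A_t ∪ {(u, w) : uw ∈ E ∪ X}` is a feasible FTF
solution with `ℓ = n` iff for every `e ∈ E` the bipartite graph `(U, W, (E ∪ X) \ {e})`
contains a perfect matching. -/
theorem stmt17 (n : ℕ) (E X : Finset (Fin n × Fin n))
    (hX : ∀ p ∈ X, p ∉ E) :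
    ftfFeasible
      ((Finset.univ.image
          (fun u : Fin n => ((Sum.inr false : BipVert n), (Sum.inl (Sum.inl u) : BipVert n)))) ∪
       (Finset.univ.image
          (fun w : Fin n => ((Sum.inl (Sum.inr w) : BipVert n), (Sum.inr true : BipVert n)))) ∪
       midArcs n (E ∪ X))
      (midArcs n E) (Sum.inr false) (Sum.inr true) n ↔
    ∀ e ∈ E, ∃ σ : Equiv.Perm (Fin n), ∀ i : Fin n, (i, σ i) ∈ (E ∪ X).erase e := by
  have hS : ((Finset.univ.image
          (fun u : Fin n => ((Sum.inr false : BipVert n), (Sum.inl (Sum.inl u) : BipVert n)))) ∪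
       (Finset.univ.image
          (fun w : Fin n => ((Sum.inl (Sum.inr w) : BipVert n), (Sum.inr true : BipVert n)))) ∪
       midArcs n (E ∪ X)) = fullArcs n (E ∪ X) := rfl
  rw [hS]
  constructor
  · intro hfeas e he
    have hf : ((Sum.inl (Sum.inl e.1) : BipVert n), (Sum.inl (Sum.inr e.2) : BipVert n))
        ∈ midArcs n E := Finset.mem_image_of_mem _ he
    obtain ⟨P, hsub, hdisj, hpath⟩ := hfeas _ hf
    have key : ∀ i : Fin n, ∃ u w : Fin n, (u, w) ∈ (E ∪ X).erase e ∧
        P i = {((Sum.inr false : BipVert n), Sum.inl (Sum.inl u)),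
           (Sum.inl (Sum.inl u), Sum.inl (Sum.inr w)),
           (Sum.inl (Sum.inr w), Sum.inr true)} := by
      intro i
      have hsub' : P i ⊆ fullArcs n (E ∪ X) :=
        fun a ha => Finset.mem_of_mem_erase (hsub i ha)
      obtain ⟨u, w, hB, hPi⟩ := path_struct hsub' (hpath i)
      refine ⟨u, w, Finset.mem_erase.mpr ⟨?_, hB⟩, hPi⟩
      intro hne
      have : ((Sum.inl (Sum.inl u) : BipVert n), (Sum.inl (Sum.inr w) : BipVert n)) ∈
          (fullArcs n (E ∪ X)).erase
            ((Sum.inl (Sum.inl e.1) : BipVert n), (Sum.inl (Sum.inr e.2) : BipVert n)) :=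
        hsub i (by rw [hPi]; simp)
      rw [Finset.mem_erase] at this
      exact this.1 (by cases hne; rfl)
    choose u w hmem hPi using key
    have hu : Function.Injective u := by
      intro i j hij
      by_contra hne
      have h1 : ((Sum.inr false : BipVert n), Sum.inl (Sum.inl (u i))) ∈ P i := by
        rw [hPi i]; simp
      have h2 : ((Sum.inr false : BipVert n), Sum.inl (Sum.inl (u i))) ∈ P j := by
        rw [hPi j, hij]; simp
      exact (Finset.disjoint_left.mp (hdisj i j hne) h1) h2
    have hw : Function.Injective w := by
      intro i j hij
      by_contra hne
      have h1 : ((Sum.inl (Sum.inr (w i)) : BipVert n), Sum.inr true) ∈ P i := by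
        rw [hPi i]; simp
      have h2 : ((Sum.inl (Sum.inr (w i)) : BipVert n), Sum.inr true) ∈ P j := by
        rw [hPi j, hij]; simp
      exact (Finset.disjoint_left.mp (hdisj i j hne) h1) h2
    let uE : Equiv.Perm (Fin n) := Equiv.ofBijective u (Finite.injective_iff_bijective.mp hu)
    let wE : Equiv.Perm (Fin n) := Equiv.ofBijective w (Finite.injective_iff_bijective.mp hw)
    refine ⟨uE.symm.trans wE, fun i => ?_⟩
    have h1 : u (uE.symm i) = i := uE.apply_symm_apply i
    have h3 := hmem (uE.symm i)
    rw [h1] at h3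
    exact h3
  · intro h f hf
    obtain ⟨e, he, hfe⟩ := Finset.mem_image.mp hf
    obtain ⟨σ, hσ⟩ := h e he
    refine ⟨fun i => {((Sum.inr false : BipVert n), Sum.inl (Sum.inl i)),
           (Sum.inl (Sum.inl i), Sum.inl (Sum.inr (σ i))),
           (Sum.inl (Sum.inr (σ i)), Sum.inr true)}, ?_, ?_, ?_⟩
    · intro i a ha
      rw [Finset.mem_erase]
      simp only [Finset.mem_insert, Finset.mem_singleton] at ha
      have hiσ := hσ i
      rw [Finset.mem_erase] at hiσ
      constructor
      · rcases ha with rfl | rfl | rfl <;> rw [← hfe] <;> simp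
        intro h1 h2
        exact hiσ.1 (by rw [Prod.ext_iff]; exact ⟨h1, h2⟩)
      · rcases ha with rfl | rfl | rfl
        · exact mem_fullArcs.mpr (Or.inl ⟨i, rfl⟩)
        · exact mem_fullArcs.mpr (Or.inr (Or.inr ⟨(i, σ i), hiσ.2, rfl⟩))
        · exact mem_fullArcs.mpr (Or.inr (Or.inl ⟨σ i, rfl⟩))
    · intro i j hij
      have hσij : σ i ≠ σ j := fun hc => hij (σ.injective hc)
      rw [Finset.disjoint_left]
      intro a ha hb
      simp only [Finset.mem_insert, Finset.mem_singleton] at ha hb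
      rcases ha with rfl | rfl | rfl <;> rcases hb with hb | hb | hb <;>
        simp_all
    · intro i
      refine ⟨[Sum.inr false, Sum.inl (Sum.inl i), Sum.inl (Sum.inr (σ i)), Sum.inr true],
        rfl, rfl, by simp, ?_⟩
      simp [Finset.ext_iff]
end
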